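/- arXiv:2007.07815 — 5 statements merged into one kernel-verified Lean document; each statement's English description precedes it below -/
import Mathlib

section
/- Let M be the 2×2 real matrix with entries M₁₁ = -(β₅+β₃+μ), M₁₂ = β₄, M₂₁ = β₃, M₂₂ = -(β₄+β₉+μ), where all parameters are nonnegative and μ > 0. If U : [0,∞) → ℝ² satisfies U'(t) = M U(t) + F(t) with F(t) componentwise nonnegative and both components of U(0) positive, then both components of U(t) are positive for all t ≥ 0. -/
/-- Auxiliary monotonicity lemma: if `u' = -c u + b v + g` with `b,v,g ≥ 0` on `(0,t₀)`,
`u` continuous on `[0,t₀]` and `u 0 > 0`, then `u t₀ > 0`. -/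
lemma aux_mono (c b : ℝ) (hb : 0 ≤ b) (u v g : ℝ → ℝ) (t₀ : ℝ) (ht₀ : 0 ≤ t₀)
    (hcontu : ∀ t ∈ Set.Icc (0:ℝ) t₀, ContinuousAt u t)
    (hd : ∀ t ∈ Set.Ioo (0:ℝ) t₀, HasDerivAt u (-c * u t + b * v t + g t) t)
    (hv : ∀ t ∈ Set.Ioo (0:ℝ) t₀, 0 ≤ v t)
    (hg : ∀ t ∈ Set.Ioo (0:ℝ) t₀, 0 ≤ g t)
    (hu0 : 0 < u 0) : 0 < u t₀ := by
  set f : ℝ → ℝ := fun s => Real.exp (c * s) * u s with hf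
  set f' : ℝ → ℝ := fun s =>
    Real.exp (c * s) * c * u s + Real.exp (c * s) * (-c * u s + b * v s + g s) with hf'
  have hmono : MonotoneOn f (Set.Icc 0 t₀) := by
    apply monotoneOn_of_hasDerivWithinAt_nonneg (convex_Icc 0 t₀) (f' := f')
    · exact fun t ht => (((Real.continuous_exp.comp (continuous_const.mul continuous_id)).continuousAt).mul (hcontu t ht)).continuousWithinAt
    · intro x hx
      rw [interior_Icc] at hx
      have h1 : HasDerivAt (fun s => Real.exp (c * s)) (Real.exp (c * x) * c) x :=
        by simpa using ((hasDerivAt_id x).const_mul c).exp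
      exact (h1.mul (hd x hx)).hasDerivWithinAt
    · intro x hx
      rw [interior_Icc] at hx
      have : f' x = Real.exp (c * x) * (b * v x + g x) := by simp [hf']; ring
      rw [this]
      have := hv x hx
      have := hg x hx
      positivity
  have h01 : f 0 ≤ f t₀ := hmono (Set.left_mem_Icc.2 ht₀) (Set.right_mem_Icc.2 ht₀) ht₀
  have hf0 : f 0 = u 0 := by simp [hf]
  have : (0:ℝ) < Real.exp (c * t₀) * u t₀ := by
    have : f 0 ≤ Real.exp (c * t₀) * u t₀ := h01
    linarith [hf0 ▸ this, hu0]
  nlinarith [Real.exp_pos (c * t₀)]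

theorem metzler_positivity
    (β₃ β₄ β₅ β₉ μ : ℝ)
    (h3 : 0 ≤ β₃) (h4 : 0 ≤ β₄) (h5 : 0 ≤ β₅) (h9 : 0 ≤ β₉) (hμ : 0 < μ)
    (M : Matrix (Fin 2) (Fin 2) ℝ)
    (hM : M = !![-(β₅ + β₃ + μ), β₄; β₃, -(β₄ + β₉ + μ)])
    (U F : ℝ → Fin 2 → ℝ)
    (hF : ∀ i, Continuous (fun t => F t i))
    (hFpos : ∀ t ∈ Set.Ici (0:ℝ), ∀ i, 0 ≤ F t i)
    (hU : ∀ t ∈ Set.Ici (0:ℝ), ∀ i,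
      HasDerivAt (fun s => U s i) (M.mulVec (U t) i + F t i) t)
    (hU0 : ∀ i, 0 < U 0 i) :
    ∀ t ∈ Set.Ici (0:ℝ), ∀ i, 0 < U t i := by
  -- mulVec computation
  have hmv0 : ∀ v : Fin 2 → ℝ, M.mulVec v 0 = -(β₅ + β₃ + μ) * v 0 + β₄ * v 1 := by
    intro v; subst hM; simp [Matrix.mulVec, dotProduct, Fin.sum_univ_two]
  have hmv1 : ∀ v : Fin 2 → ℝ, M.mulVec v 1 = -(β₄ + β₉ + μ) * v 1 + β₃ * v 0 := by
    intro v; subst hM; simp [Matrix.mulVec, dotProduct, Fin.sum_univ_two]; ring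
  by_contra hcon
  push_neg at hcon
  obtain ⟨t₁, ht₁, i₁, hti₁⟩ := hcon
  set S : Set ℝ := {t | 0 ≤ t ∧ (U t 0 ≤ 0 ∨ U t 1 ≤ 0)} with hS
  have hne : S.Nonempty := by
    refine ⟨t₁, ht₁, ?_⟩
    fin_cases i₁
    · exact Or.inl hti₁
    · exact Or.inr hti₁
  have hbdd : BddBelow S := ⟨0, fun x hx => hx.1⟩
  set t₀ := sInf S with ht₀def
  have ht₀0 : 0 ≤ t₀ := le_csInf hne fun x hx => hx.1
  have hbelow : ∀ s, 0 ≤ s → s < t₀ → ∀ i, 0 < U s i := by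
    intro s hs hst i
    by_contra h
    push_neg at h
    have hsS : s ∈ S := by
      refine ⟨hs, ?_⟩
      fin_cases i
      · exact Or.inl h
      · exact Or.inr h
    exact absurd (csInf_le hbdd hsS) (not_le.2 hst)
  -- positivity at t₀ via the monotonicity lemma
  have hpos0 : 0 < U t₀ 0 := by
    apply aux_mono (β₅ + β₃ + μ) β₄ h4 (fun s => U s 0) (fun s => U s 1) (fun s => F s 0) t₀ ht₀0
    · exact fun t ht => (hU t ht.1 0).continuousAt
    · intro t ht
      have := hU t (le_of_lt ht.1) 0
      rw [hmv0] at this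
      exact this
    · exact fun t ht => le_of_lt (hbelow t (le_of_lt ht.1) ht.2 1)
    · exact fun t ht => hFpos t (le_of_lt ht.1) 0
    · exact hU0 0
  have hpos1 : 0 < U t₀ 1 := by
    apply aux_mono (β₄ + β₉ + μ) β₃ h3 (fun s => U s 1) (fun s => U s 0) (fun s => F s 1) t₀ ht₀0
    · exact fun t ht => (hU t ht.1 1).continuousAt
    · intro t ht
      have := hU t (le_of_lt ht.1) 1
      rw [hmv1] at this
      exact this
    · exact fun t ht => le_of_lt (hbelow t (le_of_lt ht.1) ht.2 0)
    · exact fun t ht => hFpos t (le_of_lt ht.1) 1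
    · exact hU0 1
  -- derive contradiction: a neighborhood of t₀ has both components positive
  have hc0 : ContinuousAt (fun s => U s 0) t₀ := (hU t₀ ht₀0 0).continuousAt
  have hc1 : ContinuousAt (fun s => U s 1) t₀ := (hU t₀ ht₀0 1).continuousAt
  have hev : ∀ᶠ s in nhds t₀, 0 < U s 0 ∧ 0 < U s 1 :=
    (hc0.eventually (eventually_gt_nhds hpos0)).and (hc1.eventually (eventually_gt_nhds hpos1))
  rw [Metric.eventually_nhds_iff] at hev
  obtain ⟨ε, hε, hball⟩ := hev
  obtain ⟨s, hsS, hslt⟩ := (csInf_lt_iff hbdd hne).1 (show sInf S < t₀ + ε by linarith)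
  have hs₀ : t₀ ≤ s := csInf_le hbdd hsS
  have : 0 < U s 0 ∧ 0 < U s 1 := hball (by rw [Real.dist_eq]; rw [abs_lt]; constructor <;> linarith)
  rcases hsS.2 with h | h
  · linarith [this.1]
  · linarith [this.2]
end

section
/- Let A = (a_ij) be an n×n real matrix with a_ii ≥ Σ_{j≠i} |a_ij| for all i, and set r_i = Σ_{j>i} |a_ij|. Then ∏_{i=1}^n (a_ii - r_i) ≤ det A ≤ ∏_{i=1}^n (a_ii + r_i). -/
open Finset

theorem price_aux : ∀ (n : ℕ) (A : Matrix (Fin n) (Fin n) ℝ),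
    (∀ i : Fin n, ∑ j ∈ univ \ {i}, |A i j| ≤ A i i) →
    (∏ i : Fin n, (A i i - ∑ j ∈ univ.filter (fun j => i < j), |A i j|)) ≤ A.det ∧
      A.det ≤ ∏ i : Fin n, (A i i + ∑ j ∈ univ.filter (fun j => i < j), |A i j|) := by
  intro n
  induction n with
  | zero =>
    intro A h
    simp [Matrix.det_fin_zero]
  | succ n ih =>
    intro A h
    set L : Fin (n + 1) := Fin.last n with hL
    set a : ℝ := A L L with ha_def
    have hrow : ∑ j ∈ univ \ {L}, |A L j| ≤ a := h L
    have hrow_nonneg : (0:ℝ) ≤ ∑ j ∈ univ \ {L}, |A L j| :=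
      Finset.sum_nonneg fun j _ => abs_nonneg _
    have ha0 : 0 ≤ a := le_trans hrow_nonneg hrow
    have hlastfilter : univ.filter (fun j => L < j) = (∅ : Finset (Fin (n+1))) := by
      apply Finset.filter_eq_empty_iff.mpr
      intro j _
      exact not_lt.mpr (Fin.le_last j)
    have hrL : ∑ j ∈ univ.filter (fun j => L < j), |A L j| = 0 := by
      rw [hlastfilter]; simp
    rcases eq_or_lt_of_le ha0 with hzero | ha
    · -- a = 0 : row L is zero, everything is 0
      have hz : ∀ j ∈ univ \ {L}, |A L j| = 0 := by
        have := Finset.sum_eq_zero_iff_of_nonneg (fun j _ => abs_nonneg (A L j)) |>.mp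
          (le_antisymm (hzero ▸ hrow) hrow_nonneg)
        exact this
      have hrowzero : ∀ j, A L j = 0 := by
        intro j
        by_cases hj : j = L
        · rw [hj, ← ha_def, ← hzero]
        · exact abs_eq_zero.mp (hz j (by simp [hj]))
      have hdet0 : A.det = 0 := Matrix.det_eq_zero_of_row_eq_zero L hrowzero
      have hfac0 : A L L - ∑ j ∈ univ.filter (fun j => L < j), |A L j| = 0 := by
        rw [hrL, ← ha_def, ← hzero]; ring
      have hfac0' : A L L + ∑ j ∈ univ.filter (fun j => L < j), |A L j| = 0 := by
        rw [hrL, ← ha_def, ← hzero]; ring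
      constructor
      · rw [hdet0, Finset.prod_eq_zero (Finset.mem_univ L) hfac0]
      · rw [hdet0, Finset.prod_eq_zero (Finset.mem_univ L) hfac0']
    · -- a > 0 : eliminate last column
      have hane : a ≠ 0 := ne_of_gt ha
      set c : Fin (n+1) → ℝ := fun i => if i = L then 0 else -(A i L)/a with hc
      set B : Matrix (Fin (n+1)) (Fin (n+1)) ℝ := fun i j => A i j + c i * A L j with hB
      have hdetAB : B.det = A.det :=
        Matrix.det_eq_of_forall_row_eq_smul_add_const c L (by simp [hc]) (fun i j => rfl)
      have hBcol : ∀ i : Fin (n+1), i ≠ L → B i L = 0 := by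
        intro i hi
        simp only [hB, hc, if_neg hi]
        field_simp
        rw [← ha_def]; ring
      set A'' : Matrix (Fin n) (Fin n) ℝ := B.submatrix Fin.castSucc Fin.castSucc with hA''
      -- determinant factorization
      have hdetfac : A.det = a * A''.det := by
        rw [← hdetAB, Matrix.det_succ_column B L]
        rw [Finset.sum_eq_single L]
        · have hsab : L.succAbove = Fin.castSucc := Fin.succAbove_last
          have hBLL : B L L = a := by simp [hB, hc, ha_def]
          rw [hBLL, hsab]
          have : ((-1 : ℝ)) ^ ((L : ℕ) + (L : ℕ)) = 1 := Even.neg_one_pow ⟨(L : ℕ), rfl⟩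
          rw [this, hA'']
          ring
        · intro i _ hi
          rw [hBcol i hi]; ring
        · intro habs
          exact absurd (Finset.mem_univ L) habs
      -- generic sum-splitting facts
      have hsplitD : ∀ (g : Fin (n+1) → ℝ) (i : Fin n),
          ∑ j ∈ univ \ {i.castSucc}, g j = g L + ∑ j ∈ univ \ {i}, g j.castSucc := by
        intro g i
        rw [Finset.sum_sdiff_eq_sub (Finset.subset_univ _),
            Finset.sum_sdiff_eq_sub (Finset.subset_univ _),
            Finset.sum_singleton, Finset.sum_singleton, Fin.sum_univ_castSucc]
        ring
      have hsplitF : ∀ (g : Fin (n+1) → ℝ) (i : Fin n),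
          ∑ j ∈ univ.filter (fun j => i.castSucc < j), g j
            = g L + ∑ j ∈ univ.filter (fun j => i < j), g j.castSucc := by
        intro g i
        rw [Finset.sum_filter, Finset.sum_filter, Fin.sum_univ_castSucc]
        simp only [Fin.castSucc_lt_castSucc_iff, Fin.castSucc_lt_last, if_true]
        ring
      have hsplitU : ∀ (g : Fin (n+1) → ℝ),
          ∑ j ∈ univ \ {L}, g j = ∑ j : Fin n, g j.castSucc := by
        intro g
        rw [Finset.sum_sdiff_eq_sub (Finset.subset_univ _), Finset.sum_singleton,
          Fin.sum_univ_castSucc]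
        ring
      have hsubD : ∀ (g : Fin n → ℝ) (i : Fin n),
          g i + ∑ j ∈ univ \ {i}, g j = ∑ j : Fin n, g j := by
        intro g i
        rw [Finset.sum_sdiff_eq_sub (Finset.subset_univ _), Finset.sum_singleton]
        ring
      have hsubF : ∀ (g : Fin n → ℝ), (∀ j, 0 ≤ g j) → ∀ i : Fin n,
          g i + ∑ j ∈ univ.filter (fun j => i < j), g j ≤ ∑ j : Fin n, g j := by
        intro g hg i
        have hnotmem : i ∉ univ.filter (fun j => i < j) := by simp
        calc g i + ∑ j ∈ univ.filter (fun j => i < j), g j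
            = ∑ j ∈ insert i (univ.filter (fun j => i < j)), g j :=
              (Finset.sum_insert hnotmem).symm
          _ ≤ ∑ j : Fin n, g j :=
              Finset.sum_le_sum_of_subset_of_nonneg (Finset.subset_univ _)
                (fun j _ _ => hg j)
      -- row L facts
      have hLsum : ∑ j : Fin n, |A L j.castSucc| ≤ a := by
        rw [← hsplitU (fun j => |A L j|)]; exact hrow
      -- per-row estimates
      have key : ∀ i : Fin n,
          (∑ j ∈ univ \ {i}, |A'' i j| ≤ A'' i i) ∧
          (A i.castSucc i.castSucc - ∑ j ∈ univ.filter (fun j => i.castSucc < j), |A i.castSucc j|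
            ≤ A'' i i - ∑ j ∈ univ.filter (fun j => i < j), |A'' i j|) ∧
          (A'' i i + ∑ j ∈ univ.filter (fun j => i < j), |A'' i j|
            ≤ A i.castSucc i.castSucc + ∑ j ∈ univ.filter (fun j => i.castSucc < j), |A i.castSucc j|) := by
        intro i
        set i' : Fin (n+1) := i.castSucc with hi'
        have hine : i' ≠ L := (Fin.castSucc_lt_last i).ne
        set t : ℝ := |A i' L| / a with ht
        have ht0 : 0 ≤ t := div_nonneg (abs_nonneg _) ha0
        have hta : t * a = |A i' L| := by rw [ht, div_mul_cancel₀ _ hane]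
        have hci' : |c i'| = t := by
          rw [hc]; simp only [if_neg hine]
          rw [abs_div, abs_neg, abs_of_pos ha, ht]
        -- pointwise bound
        have pw : ∀ j : Fin n, |A'' i j| ≤ |A i' j.castSucc| + t * |A L j.castSucc| := by
          intro j
          have : A'' i j = A i' j.castSucc + c i' * A L j.castSucc := rfl
          rw [this]
          calc |A i' j.castSucc + c i' * A L j.castSucc|
              ≤ |A i' j.castSucc| + |c i' * A L j.castSucc| := abs_add_le _ _
            _ = |A i' j.castSucc| + t * |A L j.castSucc| := by rw [abs_mul, hci']
        -- diagonal bounds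
        have hdiag : A'' i i = A i' i' + c i' * A L i' := rfl
        have hdiag_lb : A i' i' - t * |A L i'| ≤ A'' i i := by
          have h1 : -(t * |A L i'|) ≤ c i' * A L i' := by
            have := neg_abs_le (c i' * A L i')
            rw [abs_mul, hci'] at this
            exact this
          rw [hdiag]; linarith
        have hdiag_ub : A'' i i ≤ A i' i' + t * |A L i'| := by
          have h1 : c i' * A L i' ≤ t * |A L i'| := by
            have := le_abs_self (c i' * A L i')
            rw [abs_mul, hci'] at this
            exact this
          rw [hdiag]; linarith
        -- row i' dominance split
        have hri : |A i' L| + ∑ j ∈ univ \ {i}, |A i' j.castSucc| ≤ A i' i' := by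
          have := h i'
          rw [hsplitD (fun j => |A i' j|) i] at this
          exact this
        -- row L bounds
        have hLrowD : |A L i'| + ∑ j ∈ univ \ {i}, |A L j.castSucc| ≤ a := by
          have := hsubD (fun j => |A L j.castSucc|) i
          -- g i = |A L i'|
          rw [this]; exact hLsum
        have hLrowF : |A L i'| + ∑ j ∈ univ.filter (fun j => i < j), |A L j.castSucc| ≤ a :=
          le_trans (hsubF (fun j => |A L j.castSucc|) (fun j => abs_nonneg _) i) hLsum
        -- superdiagonal split for row i'
        have hPsplit : ∑ j ∈ univ.filter (fun j => i' < j), |A i' j|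
            = |A i' L| + ∑ j ∈ univ.filter (fun j => i < j), |A i' j.castSucc| :=
          hsplitF (fun j => |A i' j|) i
        -- sum bounds for A''
        have hsumD : ∑ j ∈ univ \ {i}, |A'' i j|
            ≤ ∑ j ∈ univ \ {i}, |A i' j.castSucc| + t * ∑ j ∈ univ \ {i}, |A L j.castSucc| := by
          calc ∑ j ∈ univ \ {i}, |A'' i j|
              ≤ ∑ j ∈ univ \ {i}, (|A i' j.castSucc| + t * |A L j.castSucc|) :=
                Finset.sum_le_sum fun j _ => pw j
            _ = _ := by rw [Finset.sum_add_distrib, Finset.mul_sum]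
        have hsumF : ∑ j ∈ univ.filter (fun j => i < j), |A'' i j|
            ≤ ∑ j ∈ univ.filter (fun j => i < j), |A i' j.castSucc|
              + t * ∑ j ∈ univ.filter (fun j => i < j), |A L j.castSucc| := by
          calc ∑ j ∈ univ.filter (fun j => i < j), |A'' i j|
              ≤ ∑ j ∈ univ.filter (fun j => i < j), (|A i' j.castSucc| + t * |A L j.castSucc|) :=
                Finset.sum_le_sum fun j _ => pw j
            _ = _ := by rw [Finset.sum_add_distrib, Finset.mul_sum]
        have hsumF0 : 0 ≤ ∑ j ∈ univ.filter (fun j => i < j), |A'' i j| :=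
          Finset.sum_nonneg fun j _ => abs_nonneg _
        refine ⟨?_, ?_, ?_⟩
        · -- dominance
          have h1 : t * ∑ j ∈ univ \ {i}, |A L j.castSucc| ≤ t * (a - |A L i'|) :=
            mul_le_mul_of_nonneg_left (by linarith) ht0
          have h2 : t * (a - |A L i'|) = |A i' L| - t * |A L i'| := by
            rw [mul_sub, hta]
          linarith
        · -- lower bound factor
          have h1 : t * ∑ j ∈ univ.filter (fun j => i < j), |A L j.castSucc|
              ≤ t * (a - |A L i'|) := mul_le_mul_of_nonneg_left (by linarith) ht0
          have h2 : t * (a - |A L i'|) = |A i' L| - t * |A L i'| := by rw [mul_sub, hta]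
          rw [hPsplit]
          linarith
        · -- upper bound factor
          have h1 : t * ∑ j ∈ univ.filter (fun j => i < j), |A L j.castSucc|
              ≤ t * (a - |A L i'|) := mul_le_mul_of_nonneg_left (by linarith) ht0
          have h2 : t * (a - |A L i'|) = |A i' L| - t * |A L i'| := by rw [mul_sub, hta]
          rw [hPsplit]
          linarith
      obtain ⟨hlowIH, hupIH⟩ := ih A'' (fun i => (key i).1)
      -- nonnegativity of the lower factors of A
      have hlowA_nonneg : ∀ i : Fin n,
          0 ≤ A i.castSucc i.castSucc
            - ∑ j ∈ univ.filter (fun j => i.castSucc < j), |A i.castSucc j| := by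
        intro i
        have hsubset : univ.filter (fun j => i.castSucc < j) ⊆ univ \ {i.castSucc} := by
          intro j hj
          simp only [Finset.mem_filter] at hj
          simp only [Finset.mem_sdiff, Finset.mem_univ, Finset.mem_singleton, true_and]
          exact fun hji => (hj.2.ne' hji).elim
        have := Finset.sum_le_sum_of_subset_of_nonneg hsubset
          (fun j _ _ => abs_nonneg (A i.castSucc j))
        have := le_trans this (h i.castSucc)
        linarith
      have hlowB_nonneg : ∀ i : Fin n,
          0 ≤ A'' i i - ∑ j ∈ univ.filter (fun j => i < j), |A'' i j| := by
        intro i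
        exact le_trans (hlowA_nonneg i) (key i).2.1
      -- product of castSucc factors
      have hprod_low : ∏ i : Fin n,
          (A i.castSucc i.castSucc - ∑ j ∈ univ.filter (fun j => i.castSucc < j), |A i.castSucc j|)
          ≤ ∏ i : Fin n, (A'' i i - ∑ j ∈ univ.filter (fun j => i < j), |A'' i j|) :=
        Finset.prod_le_prod (fun i _ => hlowA_nonneg i) (fun i _ => (key i).2.1)
      have hprod_up : ∏ i : Fin n, (A'' i i + ∑ j ∈ univ.filter (fun j => i < j), |A'' i j|)
          ≤ ∏ i : Fin n,
            (A i.castSucc i.castSucc + ∑ j ∈ univ.filter (fun j => i.castSucc < j), |A i.castSucc j|) := by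
        apply Finset.prod_le_prod
        · intro i _
          have h1 := hlowB_nonneg i
          have h2 : (0:ℝ) ≤ ∑ j ∈ univ.filter (fun j => i < j), |A'' i j| :=
            Finset.sum_nonneg fun j _ => abs_nonneg _
          linarith
        · intro i _
          exact (key i).2.2
      constructor
      · calc ∏ i : Fin (n+1), (A i i - ∑ j ∈ univ.filter (fun j => i < j), |A i j|)
            = (∏ i : Fin n, (A i.castSucc i.castSucc
                - ∑ j ∈ univ.filter (fun j => i.castSucc < j), |A i.castSucc j|)) * (a - 0) := by
              rw [Fin.prod_univ_castSucc]
              congr 1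
              rw [← hrL]
          _ ≤ (∏ i : Fin n, (A'' i i - ∑ j ∈ univ.filter (fun j => i < j), |A'' i j|)) * a := by
              rw [sub_zero]
              exact mul_le_mul_of_nonneg_right hprod_low ha0
          _ ≤ A''.det * a := mul_le_mul_of_nonneg_right hlowIH ha0
          _ = A.det := by rw [hdetfac]; ring
      · calc A.det = A''.det * a := by rw [hdetfac]; ring
          _ ≤ (∏ i : Fin n, (A'' i i + ∑ j ∈ univ.filter (fun j => i < j), |A'' i j|)) * a :=
              mul_le_mul_of_nonneg_right hupIH ha0
          _ ≤ (∏ i : Fin n, (A i.castSucc i.castSucc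
                + ∑ j ∈ univ.filter (fun j => i.castSucc < j), |A i.castSucc j|)) * a :=
              mul_le_mul_of_nonneg_right hprod_up ha0
          _ = ∏ i : Fin (n+1), (A i i + ∑ j ∈ univ.filter (fun j => i < j), |A i j|) := by
              rw [Fin.prod_univ_castSucc]
              congr 1
              rw [hrL]; ring

/-- Price's bound: for a real matrix with (weakly) dominant nonnegative diagonal,
the determinant is bounded between `∏ (aᵢᵢ - rᵢ)` and `∏ (aᵢᵢ + rᵢ)`, where `rᵢ`
is the sum of the absolute values of the strictly super-diagonal entries of row `i`. -/
theorem price_det_bounds {n : ℕ} (A : Matrix (Fin n) (Fin n) ℝ)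
    (h : ∀ i : Fin n, ∑ j ∈ univ \ {i}, |A i j| ≤ A i i) :
    (∏ i : Fin n, (A i i - ∑ j ∈ univ.filter (fun j => i < j), |A i j|)) ≤ A.det ∧
      A.det ≤ ∏ i : Fin n, (A i i + ∑ j ∈ univ.filter (fun j => i < j), |A i j|) := by
  exact price_aux n A h
end

section
/- For an n×n complex matrix A, the spectral abscissa s(A) = max{Re λ : λ eigenvalue of A} satisfies s(A) = lim_{t→∞} (ln ‖e^{tA}‖)/t = inf_{t>0} (ln ‖e^{tA}‖)/t, for any operator norm ‖·‖. -/
open Filter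
open NormedSpace Topology

section Aux

variable {E : Type*} [NormedAddCommGroup E] [NormedSpace ℂ E] [FiniteDimensional ℂ E]
  [CompleteSpace E]

lemma aux_eigen_of_mem_spectrum (T : E →L[ℂ] E) {μ : ℂ} (hμ : μ ∈ spectrum ℂ T) :
    ∃ v : E, v ≠ 0 ∧ T v = μ • v := by
  rw [spectrum.mem_iff] at hμ
  by_contra h
  push_neg at h
  apply hμ
  set S : E →L[ℂ] E := algebraMap ℂ (E →L[ℂ] E) μ - T with hS
  have hSv : ∀ v : E, S v = μ • v - T v := by
    intro v
    simp [hS, Algebra.algebraMap_eq_smul_one]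
  have hinj : Function.Injective S := by
    rw [injective_iff_map_eq_zero]
    intro v hv
    by_contra hv0
    exact (h v hv0) (by rw [hSv] at hv; linear_combination (norm := module) -hv)
  have hbij : Function.Bijective (S : E →ₗ[ℂ] E) :=
    ⟨hinj, (LinearMap.injective_iff_surjective (f := (S : E →ₗ[ℂ] E))).mp hinj⟩
  let e : E ≃L[ℂ] E := (LinearEquiv.ofBijective (S : E →ₗ[ℂ] E) hbij).toContinuousLinearEquiv
  exact ⟨e.toUnit, by ext v; rfl⟩

lemma aux_pow_eigen (T : E →L[ℂ] E) {μ : ℂ} {v : E} (hv : T v = μ • v) (n : ℕ) :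
    (T ^ n) v = μ ^ n • v := by
  induction n with
  | zero => simp
  | succ n ih =>
    rw [pow_succ, ContinuousLinearMap.mul_apply, hv, map_smul, ih, smul_smul, ← pow_succ']

lemma aux_exp_eigen (T : E →L[ℂ] E) {μ : ℂ} {v : E} (hv : T v = μ • v) :
    exp T v = Complex.exp μ • v := by
  have hsum : Summable fun n : ℕ => (n.factorial⁻¹ : ℂ) • T ^ n := expSeries_summable' T
  have h1 : exp T v = ∑' n : ℕ, ((n.factorial⁻¹ : ℂ) • T ^ n) v := by
    rw [exp_eq_tsum ℂ]
    exact ((ContinuousLinearMap.apply ℂ E v).map_tsum hsum)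
  rw [h1]
  have h2 : ∀ n : ℕ, ((n.factorial⁻¹ : ℂ) • T ^ n) v = ((n.factorial⁻¹ : ℂ) * μ ^ n) • v := by
    intro n
    rw [ContinuousLinearMap.smul_apply, aux_pow_eigen T hv n, smul_smul]
  simp_rw [h2]
  rw [Summable.tsum_smul_const]
  · congr 1
    rw [Complex.exp_eq_exp_ℂ, exp_eq_tsum ℂ]
    simp_rw [smul_eq_mul]
  · simpa [smul_eq_mul] using expSeries_summable' (𝕂 := ℂ) μ

lemma aux_mem_spectrum_of_eigen (T : E →L[ℂ] E) {μ : ℂ} {v : E} (hv0 : v ≠ 0)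
    (hv : T v = μ • v) : μ ∈ spectrum ℂ T := by
  rw [spectrum.mem_iff]
  rintro ⟨u, hu⟩
  have h1 : (algebraMap ℂ (E →L[ℂ] E) μ - T) v = 0 := by
    simp [Algebra.algebraMap_eq_smul_one, hv]
  have h2 : ((u.inv * u.val : E →L[ℂ] E)) v = 0 := by
    rw [ContinuousLinearMap.mul_apply, hu, h1, map_zero]
  rw [u.inv_val] at h2
  exact hv0 h2

lemma aux_spectrum_exp_subset (T : E →L[ℂ] E) :
    spectrum ℂ (exp T) ⊆ Complex.exp '' spectrum ℂ T := by
  intro μ hμ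
  obtain ⟨v, hv0, hv⟩ := aux_eigen_of_mem_spectrum (exp T) hμ
  set W : Submodule ℂ E := LinearMap.ker (((exp T : E →L[ℂ] E) : E →ₗ[ℂ] E) - μ • LinearMap.id) with hW
  have hmemW : ∀ x : E, x ∈ W ↔ exp T x = μ • x := by
    intro x
    rw [hW, LinearMap.mem_ker, LinearMap.sub_apply, LinearMap.smul_apply, LinearMap.id_apply,
      sub_eq_zero]
    rfl
  have hvW : v ∈ W := (hmemW v).mpr hv
  have hcomm : ∀ x : E, T (exp T x) = exp T (T x) := by
    intro x
    have c : Commute T (exp T) := (Commute.refl T).exp_right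
    have := congrArg (fun S : E →L[ℂ] E => S x) c.eq
    simpa [ContinuousLinearMap.mul_apply] using this
  have hinv : ∀ x ∈ W, (T : E →ₗ[ℂ] E) x ∈ W := by
    intro x hx
    rw [hmemW] at hx ⊢
    show exp T (T x) = μ • T x
    rw [← hcomm, hx, map_smul]
  letI : Nontrivial W := nontrivial_of_ne ⟨v, hvW⟩ 0 (by simp [Subtype.ext_iff, hv0])
  obtain ⟨lam, hlam⟩ := Module.End.exists_eigenvalue ((T : E →ₗ[ℂ] E).restrict hinv)
  obtain ⟨w, hwE, hw0⟩ := hlam.exists_hasEigenvector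
  have hwE' : ((T : E →ₗ[ℂ] E).restrict hinv) w = lam • w :=
    Module.End.mem_eigenspace_iff.mp hwE
  have hfw : T (w : E) = lam • (w : E) := by
    have := congrArg (Subtype.val) hwE'
    simpa [LinearMap.restrict_apply] using this
  have hexpw : exp T (w : E) = Complex.exp lam • (w : E) := aux_exp_eigen T hfw
  have hμw : exp T (w : E) = μ • (w : E) := (hmemW _).mp w.2
  have hw0' : (w : E) ≠ 0 := fun h => hw0 (Subtype.ext h)
  have : μ = Complex.exp lam := by
    have h3 : (μ - Complex.exp lam) • (w : E) = 0 := by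
      rw [sub_smul, ← hμw, ← hexpw, sub_self]
    rcases smul_eq_zero.mp h3 with h | h
    · exact sub_eq_zero.mp h
    · exact absurd h hw0'
  exact ⟨lam, aux_mem_spectrum_of_eigen T hw0' hfw, this.symm⟩

lemma aux_norm_pos [Nontrivial E] (T : E →L[ℂ] E) : 0 < ‖exp T‖ := by
  letI : NormedAlgebra ℚ (E →L[ℂ] E) := .restrictScalars ℚ ℂ _
  rcases (isUnit_exp T) with ⟨u, hu⟩
  rw [norm_pos_iff]
  intro h0
  obtain ⟨v, hv⟩ := exists_ne (0 : E)
  have : (u.inv * u.val) v = 0 := by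
    rw [hu, h0, mul_zero]; rfl
  rw [u.inv_val] at this
  exact hv this

lemma aux_smul_apply_eigen (T : E →L[ℂ] E) {μ : ℂ} {v : E} (hv : T v = μ • v) (t : ℝ) :
    (t • T) v = ((t : ℂ) * μ) • v := by
  rw [ContinuousLinearMap.smul_apply, hv, ← smul_smul, ← algebraMap_smul ℂ t (μ • v),
    Complex.coe_algebraMap]

lemma aux_lower {s : ℝ} (f : E →L[ℂ] E) (hs1 : s ∈ Complex.re '' spectrum ℂ f) (t : ℝ) :
    Real.exp (t * s) ≤ ‖exp (t • f)‖ := by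
  obtain ⟨lam, hlam, hre⟩ := hs1
  obtain ⟨v, hv0, hv⟩ := aux_eigen_of_mem_spectrum f hlam
  have h1 : exp (t • f) v = Complex.exp ((t : ℂ) * lam) • v :=
    aux_exp_eigen (t • f) (aux_smul_apply_eigen f hv t)
  have h2 : ‖exp (t • f) v‖ = Real.exp (t * s) * ‖v‖ := by
    rw [h1, norm_smul, Complex.norm_exp]
    congr 2
    simp [Complex.mul_re, ← hre]
  have h3 := (exp (t • f)).le_opNorm v
  rw [h2] at h3
  have hvpos : 0 < ‖v‖ := norm_pos_iff.mpr hv0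
  exact le_of_mul_le_mul_right h3 hvpos

lemma aux_nat_tendsto [Nontrivial E] (f : E →L[ℂ] E) (s : ℝ)
    (hs : IsGreatest (Complex.re '' spectrum ℂ f) s) :
    Tendsto (fun n : ℕ => Real.log ‖exp ((n : ℝ) • f)‖ / n) atTop (𝓝 s) := by
  letI : NormedAlgebra ℚ (E →L[ℂ] E) := .restrictScalars ℚ ℂ _
  set B : E →L[ℂ] E := exp f with hB
  have hBn : ∀ n : ℕ, exp ((n : ℝ) • f) = B ^ n := by
    intro n
    rw [Nat.cast_smul_eq_nsmul, exp_nsmul]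
  have hρ : spectralRadius ℂ B = ENNReal.ofReal (Real.exp s) := by
    apply le_antisymm
    · apply iSup₂_le
      intro μ hμ
      obtain ⟨lam, hlam, hμe⟩ := aux_spectrum_exp_subset f hμ
      rw [← enorm_eq_nnnorm, ← ofReal_norm]
      apply ENNReal.ofReal_le_ofReal
      rw [← hμe, Complex.norm_exp]
      exact Real.exp_le_exp.mpr (hs.2 ⟨lam, hlam, rfl⟩)
    · obtain ⟨lam0, hlam0, hre⟩ := hs.1
      obtain ⟨v, hv0, hv⟩ := aux_eigen_of_mem_spectrum f hlam0
      have hmem : Complex.exp lam0 ∈ spectrum ℂ B :=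
        aux_mem_spectrum_of_eigen B hv0 (aux_exp_eigen f hv)
      have : ENNReal.ofReal (Real.exp s) = (‖Complex.exp lam0‖₊ : ENNReal) := by
        rw [← enorm_eq_nnnorm, ← ofReal_norm, Complex.norm_exp, hre]
      rw [this]
      exact le_iSup₂ (f := fun k (_ : k ∈ spectrum ℂ B) => (‖k‖₊ : ENNReal)) _ hmem
  have hgel := spectrum.pow_norm_pow_one_div_tendsto_nhds_spectralRadius B
  rw [hρ] at hgel
  have h2 : Tendsto (fun n : ℕ => ‖B ^ n‖ ^ (1 / (n : ℝ))) atTop (𝓝 (Real.exp s)) := by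
    have h := (ENNReal.tendsto_toReal (ENNReal.ofReal_ne_top)).comp hgel
    simp only [Function.comp_def] at h
    rw [ENNReal.toReal_ofReal (Real.exp_pos s).le] at h
    refine h.congr fun n => ?_
    rw [ENNReal.toReal_ofReal (Real.rpow_nonneg (norm_nonneg _) _)]
  have h3 : Tendsto (fun n : ℕ => Real.log (‖B ^ n‖ ^ (1 / (n : ℝ)))) atTop
      (𝓝 (Real.log (Real.exp s))) :=
    ((Real.continuousAt_log (Real.exp_pos s).ne').tendsto).comp h2
  rw [Real.log_exp] at h3
  refine h3.congr fun n => ?_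
  have hpos : 0 < ‖B ^ n‖ := by rw [← hBn n]; exact aux_norm_pos _
  rw [Real.log_rpow hpos, hBn n, one_div, inv_mul_eq_div]


end Aux


/-- The spectral abscissa `s(A) = max { Re λ : λ ∈ spectrum A }` satisfies
`s(A) = lim_{t→∞} (ln ‖e^{tA}‖)/t = inf_{t>0} (ln ‖e^{tA}‖)/t` for any operator norm. -/
theorem spectral_abscissa_limit {E : Type*} [NormedAddCommGroup E]
    [NormedSpace ℂ E] [FiniteDimensional ℂ E] [CompleteSpace E] [Nontrivial E]
    (f : E →L[ℂ] E) (s : ℝ)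
    (hs : IsGreatest (Complex.re '' spectrum ℂ f) s) :
    Tendsto (fun t : ℝ => Real.log ‖NormedSpace.exp (t • f)‖ / t) atTop (nhds s) ∧
      s = ⨅ t : Set.Ioi (0 : ℝ), Real.log ‖NormedSpace.exp ((t : ℝ) • f)‖ / (t : ℝ) := by
  letI : NormedAlgebra ℚ (E →L[ℂ] E) := .restrictScalars ℚ ℂ _
  set g : ℝ → ℝ := fun t => Real.log ‖exp (t • f)‖ with hg
  have hpos : ∀ t : ℝ, 0 < ‖exp (t • f)‖ := fun t => aux_norm_pos _
  have hts : ∀ t : ℝ, t * s ≤ g t := fun t =>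
    (Real.le_log_iff_exp_le (hpos t)).mpr (aux_lower f hs.1 t)
  have hlow : ∀ t : ℝ, 0 < t → s ≤ g t / t := by
    intro t ht
    rw [le_div_iff₀ ht]
    linarith [hts t]
  -- maximum of ‖exp (r • f)‖ on [0, 1]
  have hcont : Continuous fun r : ℝ => ‖exp (r • f)‖ :=
    (exp_continuous.comp (continuous_id.smul continuous_const)).norm
  obtain ⟨r0, hr0, hmax⟩ := (isCompact_Icc (a := (0:ℝ)) (b := 1)).exists_isMaxOn
    (Set.nonempty_Icc.mpr zero_le_one) hcont.continuousOn
  set C : ℝ := ‖exp (r0 • f)‖ with hC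
  have hC1 : 1 ≤ C := by
    have h0 : ‖exp ((0:ℝ) • f)‖ = 1 := by
      rw [zero_smul, exp_zero]
      exact norm_one
    have h1 : ‖exp ((0:ℝ) • f)‖ ≤ C := hmax (Set.mem_Icc.mpr ⟨le_refl 0, zero_le_one⟩)
    rwa [h0] at h1
  have hlogC : 0 ≤ Real.log C := Real.log_nonneg hC1
  have hsplit : ∀ t : ℝ, 1 ≤ t → g t ≤ g (⌊t⌋₊ : ℝ) + Real.log C := by
    intro t ht
    have ht0 : (0:ℝ) ≤ t := zero_le_one.trans ht
    set n := ⌊t⌋₊ with hn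
    have hnt : (n : ℝ) ≤ t := Nat.floor_le ht0
    have hr1 : t - n ≤ 1 := by linarith [Nat.lt_floor_add_one t]
    have hr0' : (0:ℝ) ≤ t - n := by linarith
    have hdecomp : exp (t • f) = exp ((n : ℝ) • f) * exp ((t - n) • f) := by
      rw [← exp_add_of_commute (((Commute.refl f).smul_left ((n:ℝ))).smul_right (t - n))]
      congr 1
      module
    have hb : ‖exp ((t - n) • f)‖ ≤ C := hmax (Set.mem_Icc.mpr ⟨hr0', hr1⟩)
    have h1 : ‖exp (t • f)‖ ≤ ‖exp ((n : ℝ) • f)‖ * C := by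
      rw [hdecomp]
      exact (norm_mul_le _ _).trans (by
        exact mul_le_mul_of_nonneg_left hb (norm_nonneg _))
    calc g t ≤ Real.log (‖exp ((n : ℝ) • f)‖ * C) := Real.log_le_log (hpos t) h1
      _ = g (n : ℝ) + Real.log C := Real.log_mul (hpos _).ne' (by positivity)
  have hnat := aux_nat_tendsto f s hs
  set K : ℝ := Real.log C + |s| with hK
  have hK0 : 0 ≤ K := add_nonneg hlogC (abs_nonneg s)
  set u : ℕ → ℝ := fun n => (g n - n * s + K) / n with hu
  have huT : Tendsto u atTop (𝓝 0) := by
    have h1 : Tendsto (fun n : ℕ => g n / n - s) atTop (𝓝 0) := by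
      simpa using hnat.sub_const s
    have h2 : Tendsto (fun n : ℕ => K / n) atTop (𝓝 0) :=
      tendsto_const_div_atTop_nhds_zero_nat K
    have h3 := h1.add h2
    rw [add_zero] at h3
    refine Tendsto.congr' ?_ h3
    filter_upwards [eventually_ge_atTop 1] with n hn
    have hn0 : (n : ℝ) ≠ 0 := by positivity
    simp only [hu]; field_simp
  have hupper : ∀ᶠ t in atTop, g t / t ≤ s + u ⌊t⌋₊ := by
    filter_upwards [eventually_ge_atTop (1:ℝ)] with t ht
    set n := ⌊t⌋₊ with hn
    have hn1 : 1 ≤ n := Nat.le_floor (by exact_mod_cast ht)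
    have hnpos : (0:ℝ) < n := by exact_mod_cast hn1
    have hnt : (n : ℝ) ≤ t := Nat.floor_le (zero_le_one.trans ht)
    have htpos : (0:ℝ) < t := lt_of_lt_of_le one_pos ht
    have hnum0 : 0 ≤ g n - n * s + K := by linarith [hts (n : ℝ)]
    have hgt : g t - t * s ≤ g n - n * s + K := by
      have h1 := hsplit t ht
      have h2 : ((n : ℝ) - t) * s ≤ |s| := by
        have habs : |(n : ℝ) - t| ≤ 1 := by
          rw [abs_sub_comm, abs_of_nonneg (by linarith)]
          linarith [Nat.lt_floor_add_one t]
        calc ((n : ℝ) - t) * s ≤ |((n : ℝ) - t) * s| := le_abs_self _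
          _ = |(n : ℝ) - t| * |s| := abs_mul _ _
          _ ≤ 1 * |s| := mul_le_mul_of_nonneg_right habs (abs_nonneg s)
          _ = |s| := one_mul _
      rw [sub_mul] at h2
      rw [hK]
      linarith
    have step1 : g t / t - s = (g t - t * s) / t := by field_simp
    have step2 : (g t - t * s) / t ≤ (g n - n * s + K) / t :=
      (div_le_div_iff_of_pos_right htpos).mpr hgt
    have step3 : (g n - n * s + K) / t ≤ (g n - n * s + K) / n :=
      div_le_div_of_nonneg_left hnum0 hnpos hnt
    have : g t / t - s ≤ u n := by
      rw [step1, hu]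
      exact step2.trans step3
    linarith
  have hupperT : Tendsto (fun t : ℝ => s + u ⌊t⌋₊) atTop (𝓝 s) := by
    have h := huT.comp (tendsto_nat_floor_atTop (α := ℝ))
    have h2 := (tendsto_const_nhds (x := s) (f := atTop (α := ℝ))).add h
    simpa using h2
  have hlim : Tendsto (fun t : ℝ => g t / t) atTop (𝓝 s) := by
    refine tendsto_of_tendsto_of_tendsto_of_le_of_le' tendsto_const_nhds hupperT ?_ hupper
    filter_upwards [eventually_gt_atTop (0:ℝ)] with t ht using hlow t ht
  refine ⟨hlim, ?_⟩
  have hbdd : BddBelow (Set.range fun t : Set.Ioi (0:ℝ) => g t / t) := by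
    refine ⟨s, ?_⟩
    rintro x ⟨t, rfl⟩
    exact hlow t t.2
  refine le_antisymm (le_ciInf fun t => hlow t t.2) ?_
  refine ge_of_tendsto hlim ?_
  filter_upwards [eventually_gt_atTop (0:ℝ)] with t ht
  exact ciInf_le hbdd ⟨t, ht⟩
end

section
/- For an n×n complex matrix A and any operator norm, ‖e^{tA}‖ ≤ e^{t μ(A)} for all t ≥ 0, where μ(A) is the Lozinskii measure of A. -/
open Filter

open scoped Topology

/-- `‖e^{tA}‖ ≤ e^{t μ(A)}` for `t ≥ 0`, where `μ(A)` is the Lozinskii measure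
(logarithmic norm) of `A` with respect to an operator norm. -/
theorem exp_norm_le_exp_lozinskii {E : Type*} [NormedAddCommGroup E]
    [NormedSpace ℂ E] [FiniteDimensional ℂ E] [CompleteSpace E]
    (f : E →L[ℂ] E) (m : ℝ)
    (hm : Tendsto (fun h : ℝ => (‖(1 : E →L[ℂ] E) + h • f‖ - 1) / h)
      (nhdsWithin 0 (Set.Ioi 0)) (nhds m)) :
    ∀ t : ℝ, 0 ≤ t → ‖NormedSpace.exp (t • f)‖ ≤ Real.exp (t * m) := by
  -- work with the real exponential of the algebra `E →L[ℂ] E`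
  have hexp : (NormedSpace.exp : (E →L[ℂ] E) → (E →L[ℂ] E)) = NormedSpace.exp :=
    rfl
  set g : ℝ → ℝ := fun x => ‖NormedSpace.exp (x • f)‖ with hg
  -- derivative of `x ↦ exp (x • f)` at `0`
  have hderiv : ∀ x : ℝ, HasDerivAt (fun u : ℝ => NormedSpace.exp (u • f))
      (NormedSpace.exp (x • f) * f) x := fun x =>
    hasDerivAt_exp_smul_const (𝕂 := ℝ) f x
  have hcont : Continuous fun x : ℝ => NormedSpace.exp (x • f) :=
    continuous_iff_continuousAt.2 fun x => (hderiv x).continuousAt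
  have hgcont : Continuous g := continuous_norm.comp hcont
  -- Lemma A: `(‖exp (h • f)‖ - 1) / h → m` as `h → 0⁺`
  have keyA : Tendsto (fun h : ℝ => (g h - 1) / h) (𝓝[>] (0:ℝ)) (𝓝 m) := by
    have hd0 := hderiv 0
    rw [hasDerivAt_iff_isLittleO] at hd0
    have herr : Tendsto (fun h : ℝ =>
        ‖NormedSpace.exp (h • f) - NormedSpace.exp ((0:ℝ) • f) - (h - 0) • (NormedSpace.exp ((0:ℝ) • f) * f)‖ / h)
        (𝓝[>] (0:ℝ)) (𝓝 0) := by
      have := hd0.norm_norm.tendsto_div_nhds_zero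
      have := this.mono_left (nhdsWithin_le_nhds (s := Set.Ioi (0:ℝ)))
      refine this.congr' ?_
      filter_upwards [self_mem_nhdsWithin] with h hh
      have hh' : (0:ℝ) < h := hh
      simp [sub_zero, abs_of_pos hh']
    have h1 : Tendsto (fun h : ℝ => (g h - 1) / h - (‖(1 : E →L[ℂ] E) + h • f‖ - 1) / h)
        (𝓝[>] (0:ℝ)) (𝓝 0) := by
      apply squeeze_zero_norm' _ herr
      filter_upwards [self_mem_nhdsWithin] with h hh
      have hpos : (0:ℝ) < h := hh
      rw [div_sub_div_same, Real.norm_eq_abs, abs_div, abs_of_pos hpos,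
        div_le_div_iff_of_pos_right hpos]
      have : |g h - ‖(1 : E →L[ℂ] E) + h • f‖| ≤
          ‖NormedSpace.exp (h • f) - ((1 : E →L[ℂ] E) + h • f)‖ :=
        abs_norm_sub_norm_le _ _
      refine le_trans (by simpa [sub_sub_sub_cancel_right] using this) (le_of_eq ?_)
      congr 1
      simp [NormedSpace.exp_zero, sub_sub]
    have := h1.add hm
    simpa using this
  intro t ht
  rw [hexp]
  -- apply the Grönwall-type inequality on `[0, t]`
  have main : ∀ x ∈ Set.Icc (0:ℝ) t, g x ≤ gronwallBound 1 m 0 (x - 0) := by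
    apply le_gronwallBound_of_liminf_deriv_right_le (f' := fun x => m * g x)
    · exact hgcont.continuousOn
    · intro x hx r hr
      -- upper bound for right slopes
      have hsub : Tendsto (fun z : ℝ => z - x) (𝓝[>] x) (𝓝[>] (0:ℝ)) := by
        rw [tendsto_nhdsWithin_iff]
        constructor
        · have : Tendsto (fun z : ℝ => z - x) (𝓝 x) (𝓝 (x - x)) :=
            (continuous_id.sub continuous_const).tendsto x
          simpa using this.mono_left nhdsWithin_le_nhds
        · filter_upwards [self_mem_nhdsWithin] with z hz
          exact sub_pos.2 (Set.mem_Ioi.1 hz)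
      have hlim : Tendsto (fun z : ℝ => (g (z - x) - 1) / (z - x) * g x)
          (𝓝[>] x) (𝓝 (m * g x)) := (keyA.comp hsub).mul_const _
      have hev : ∀ᶠ z in 𝓝[>] x, (z - x)⁻¹ * (g z - g x) < r := by
        filter_upwards [self_mem_nhdsWithin, hlim.eventually (gt_mem_nhds hr)]
          with z hz hzr
        refine lt_of_le_of_lt ?_ hzr
        have hzx : (0:ℝ) < z - x := sub_pos.2 hz
        have hmul : g z ≤ g (z - x) * g x := by
          have hcomm : Commute ((z - x) • f) (x • f) :=
            ((Commute.refl f).smul_left (z - x)).smul_right x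
          have : (z : ℝ) • f = (z - x) • f + x • f := by
            rw [← add_smul, sub_add_cancel]
          rw [hg]
          simp only [this, NormedSpace.exp_add_of_commute_of_mem_ball (𝕂 := ℝ) hcomm
            ((NormedSpace.expSeries_radius_eq_top ℝ (E →L[ℂ] E)).symm ▸ edist_lt_top _ _)
            ((NormedSpace.expSeries_radius_eq_top ℝ (E →L[ℂ] E)).symm ▸ edist_lt_top _ _)]
          exact norm_mul_le _ _
        have : g z - g x ≤ (g (z - x) - 1) * g x := by
          have := hmul
          nlinarith [norm_nonneg (NormedSpace.exp (x • f))]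
        calc (z - x)⁻¹ * (g z - g x) ≤ (z - x)⁻¹ * ((g (z - x) - 1) * g x) := by
              exact mul_le_mul_of_nonneg_left this (le_of_lt (inv_pos.2 hzx))
          _ = (g (z - x) - 1) / (z - x) * g x := by ring
      exact hev.frequently
    · simpa [hg, NormedSpace.exp_zero] using (show ‖(1 : E →L[ℂ] E)‖ ≤ 1 from ContinuousLinearMap.norm_id_le (𝕜 := ℂ) (E := E))
    · intro x _
      simp
  have := main t ⟨ht, le_refl t⟩
  rw [gronwallBound_ε0] at this
  simpa [mul_comm] using this
end

section
/- Let a = β₁ - β₁₀ > 0, α = β₂+β₆+β₈+μ, E* = α/a, with all β_i ≥ 0 and μ > 0, β₁₀·B > 0 not required. For the 2×2 matrices F = [[0, β₁₀B/μ],[0, β₁B/μ]] and V = [[μ, β₁B/μ],[0, α + β₁₀B/μ]], V is invertible and the eigenvalues of F·V⁻¹ are 0 and R₀ = β₁B/(αμ + β₁₀B); hence the spectral radius of F·V⁻¹ equals R₀ when R₀ ≥ 0. -/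
open Polynomial

/-- Next-generation computation at the disease-free equilibrium: `V` is invertible, the
eigenvalues of `F·V⁻¹` are `0` and `R₀ = β₁B/(αμ + β₁₀B)` (its characteristic polynomial
is `X(X - R₀)`), hence when `R₀ ≥ 0` the spectral radius of `F·V⁻¹` equals `R₀`. -/
theorem next_generation_R0
    (B μ β₁ β₂ β₆ β₈ β₁₀ : ℝ) (hB : 0 < B) (hμ : 0 < μ)
    (h1 : 0 ≤ β₁) (h2 : 0 ≤ β₂) (h6 : 0 ≤ β₆) (h8 : 0 ≤ β₈) (h10 : 0 ≤ β₁₀)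
    (α : ℝ) (hα : α = β₂ + β₆ + β₈ + μ)
    (F V : Matrix (Fin 2) (Fin 2) ℝ)
    (hF : F = !![0, β₁₀ * B / μ; 0, β₁ * B / μ])
    (hV : V = !![μ, β₁ * B / μ; 0, α + β₁₀ * B / μ])
    (R₀ : ℝ) (hR : R₀ = β₁ * B / (α * μ + β₁₀ * B)) :
    IsUnit V.det ∧
      (F * V⁻¹).charpoly = X * (X - C R₀) ∧
      (0 ≤ R₀ →
        IsGreatest {r : ℝ | ∃ x : ℝ, (F * V⁻¹).charpoly.IsRoot x ∧ r = |x|} R₀) := by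
  have hα0 : 0 < α := by nlinarith
  have hd : 0 < α * μ + β₁₀ * B := by positivity
  have hd0 : α * μ + β₁₀ * B ≠ 0 := ne_of_gt hd
  have hμ0 : μ ≠ 0 := ne_of_gt hμ
  set d : ℝ := α * μ + β₁₀ * B with hdd
  have hdetV : V.det = d := by
    rw [hV, Matrix.det_fin_two_of]
    field_simp
    rw [hdd]; ring
  have hUnit : IsUnit V.det := by
    rw [hdetV]; exact (isUnit_iff_ne_zero).mpr hd0
  -- explicit inverse of V
  have hinv : V⁻¹ = !![1 / μ, -(β₁ * B) / (μ * d); 0, μ / d] := by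
    apply Matrix.inv_eq_right_inv
    rw [hV]
    ext i j
    fin_cases i <;> fin_cases j <;>
      simp [Matrix.mul_apply, Fin.sum_univ_two] <;> field_simp <;> ring
  have hM : F * V⁻¹ = !![0, β₁₀ * B / d; 0, β₁ * B / d] := by
    rw [hF, hinv]
    ext i j
    fin_cases i <;> fin_cases j <;>
      simp [Matrix.mul_apply, Fin.sum_univ_two] <;> field_simp <;> ring
  have hchar : (F * V⁻¹).charpoly = X * (X - C R₀) := by
    rw [hM, Matrix.charpoly, Matrix.det_fin_two]
    simp [Matrix.charmatrix_apply_eq, Matrix.charmatrix_apply_ne, hR]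
  refine ⟨hUnit, hchar, fun hR0 => ?_⟩
  constructor
  · exact ⟨R₀, by simp [hchar, IsRoot], (abs_of_nonneg hR0).symm⟩
  · rintro r ⟨x, hx, rfl⟩
    rw [hchar] at hx
    simp [IsRoot] at hx
    rcases hx with h | h
    · simp [h, hR0]
    · have : x = R₀ := by linarith
      simp [this, abs_of_nonneg hR0]
end
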